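/- Let p ≥ 2 and M ≥ 0 be integers, set L = p^(M+1), and let (a_n) be a mod-p Prouhet–Thue–Morse sequence of real numbers, with B_i = Σ_{n=0}^{p-1} w_i(n) · a_n. Define S_p(n) = Σ_{i=1}^{2^{p-1}-1} w_i(n) · B_i, so that a_n = (1/2^{p-1}) w_0(n) B_0 + (1/2^{p-1}) S_p(n). Then for every m with 1 ≤ m ≤ M, Σ_{n=0}^{L-1} n^m · S_p(n) = N_m(L) · B_0, where N_m(L) = 2^{p-1} · P_m − Σ_{n=0}^{L-1} n^m and P_m = Σ_{n ∈ S_0} n^m with S_0 = { n ∈ {0, ..., L-1} : v_p(n) = 0 }. -/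

import Mathlib

def vp (p n : ℕ) : ℕ := (Nat.digits p n).sum % p

def w (p i n : ℕ) : ℝ := (-1 : ℝ) ^ (i / 2 ^ (p - 1 - vp p n) % 2)

open Finset

lemma neg_one_pow_div (i a : ℕ) :
    (-1 : ℝ) ^ (i / 2 ^ a % 2) = if i.testBit a then -1 else 1 := by
  rw [Nat.testBit_eq_decide_div_mod_eq]
  rcases Nat.mod_two_eq_zero_or_one (i / 2 ^ a) with h | h <;> simp [h]

lemma flip_sum_zero {K c : ℕ} (hc : c < K) (f : ℕ → ℝ)
    (hf : ∀ i, f (i ^^^ 2 ^ c) = - f i) :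
    ∑ i ∈ range (2 ^ K), f i = 0 := by
  apply Finset.sum_involution (fun i _ => i ^^^ 2 ^ c)
  · intro i _; rw [hf]; ring
  · intro i _ _
    intro heq
    have hb : (i ^^^ 2 ^ c).testBit c = !(i.testBit c) := by
      rw [Nat.testBit_xor, Nat.testBit_two_pow_self]
      cases i.testBit c <;> rfl
    rw [heq] at hb
    simp at hb
  · intro i _; exact xor_cancel_right _ _
  · intro i hi
    simp only [mem_range] at *
    exact Nat.xor_lt_two_pow hi (Nat.pow_lt_pow_right one_lt_two hc)

lemma orth_bits {K a b : ℕ} (ha : a ≤ K) (hb : b ≤ K) :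
    ∑ i ∈ range (2 ^ K), (-1 : ℝ) ^ (i / 2 ^ a % 2) * (-1 : ℝ) ^ (i / 2 ^ b % 2)
      = if a = b then (2 : ℝ) ^ K else 0 := by
  split_ifs with hab
  · subst hab
    have h1 : ∀ i ∈ range (2 ^ K),
        (-1 : ℝ) ^ (i / 2 ^ a % 2) * (-1 : ℝ) ^ (i / 2 ^ a % 2) = 1 := by
      intro i _
      rw [neg_one_pow_div]
      split_ifs <;> norm_num
    rw [Finset.sum_congr rfl h1]
    simp [Finset.card_range]
  · -- a ≠ b
    have flip : ∀ c c' : ℕ, c' ≠ c → ∀ i,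
        ((-1 : ℝ) ^ ((i ^^^ 2 ^ c) / 2 ^ c % 2)) = - (-1 : ℝ) ^ (i / 2 ^ c % 2) ∧
        ((-1 : ℝ) ^ ((i ^^^ 2 ^ c) / 2 ^ c' % 2)) = (-1 : ℝ) ^ (i / 2 ^ c' % 2) := by
      intro c c' hcc i
      constructor
      · rw [neg_one_pow_div, neg_one_pow_div, Nat.testBit_xor, Nat.testBit_two_pow_self]
        cases i.testBit c <;> norm_num
      · rw [neg_one_pow_div, neg_one_pow_div, Nat.testBit_xor,
          Nat.testBit_two_pow_of_ne (fun h => hcc h.symm)]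
        cases i.testBit c' <;> norm_num
    rcases lt_or_eq_of_le hb with hb' | hb'
    · apply flip_sum_zero hb'
      intro i
      rw [(flip b a hab i).2, (flip b a hab i).1]
      ring
    · have ha' : a < K := lt_of_le_of_ne ha (by omega)
      apply flip_sum_zero ha'
      intro i
      rw [(flip a b (Ne.symm hab) i).1, (flip a b (Ne.symm hab) i).2]
      ring

lemma vp_lt {p : ℕ} (hp : 2 ≤ p) (n : ℕ) : vp p n < p := Nat.mod_lt _ (by omega)

lemma orth {p : ℕ} (hp : 2 ≤ p) (n r : ℕ) :
    ∑ i ∈ range (2 ^ (p - 1)), w p i n * w p i r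
      = if vp p n = vp p r then (2 : ℝ) ^ (p - 1) else 0 := by
  unfold w
  rw [orth_bits (Nat.sub_le _ _) (Nat.sub_le _ _)]
  have h1 := vp_lt hp n
  have h2 := vp_lt hp r
  have : (p - 1 - vp p n = p - 1 - vp p r) = (vp p n = vp p r) := by
    apply propext; constructor <;> intro h <;> omega
  simp only [this]


lemma digitsum_lt {p n : ℕ} (hp : 2 ≤ p) (hn : n < p) : (Nat.digits p n).sum = n := by
  rcases Nat.eq_zero_or_pos n with h | h
  · simp [h]
  · rw [Nat.digits_def' (by omega : 1 < p) h, Nat.mod_eq_of_lt hn,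
      Nat.div_eq_of_lt hn]
    simp

lemma vp_lt_self {p n : ℕ} (hp : 2 ≤ p) (hn : n < p) : vp p n = n := by
  unfold vp
  rw [digitsum_lt hp hn, Nat.mod_eq_of_lt hn]

lemma digitsum_add_mul {p : ℕ} (hp : 2 ≤ p) (d q : ℕ) (hd : d < p) :
    (Nat.digits p (d + p * q)).sum = d + (Nat.digits p q).sum := by
  rcases Nat.eq_zero_or_pos (d + p * q) with h | h
  · have hd0 : d = 0 := by omega
    have hpq : p * q = 0 := by omega
    have hq0 : q = 0 := by
      rcases Nat.mul_eq_zero.mp hpq with h' | h' <;> omega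
    simp [hd0, hq0]
  · rw [Nat.digits_def' (by omega : 1 < p) h]
    have h1 : (d + p * q) % p = d := by
      rw [Nat.add_mul_mod_self_left, Nat.mod_eq_of_lt hd]
    have h2 : (d + p * q) / p = q := by
      rw [Nat.add_mul_div_left _ _ (by omega : 0 < p), Nat.div_eq_of_lt hd]
      omega
    rw [h1, h2]
    simp

lemma sum_range_zmod {p : ℕ} [NeZero p] (f : ZMod p → ℝ) :
    ∑ d ∈ range p, f (d : ZMod p) = ∑ c : ZMod p, f c := by
  apply Finset.sum_nbij' (fun d => ((d : ℕ) : ZMod p)) (fun c => c.val)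
  · intro d _; exact mem_univ _
  · intro c _; exact mem_range.mpr (ZMod.val_lt c)
  · intro d hd; exact ZMod.val_cast_of_lt (mem_range.mp hd)
  · intro c _; exact ZMod.natCast_rightInverse c
  · intro d _; rfl

noncomputable def T (p M m : ℕ) (j : ZMod p) : ℝ :=
  ∑ n ∈ Finset.range (p ^ (M + 1)),
    if (((Nat.digits p n).sum : ZMod p) = j) then (n : ℝ) ^ m else 0

lemma reindex {p : ℕ} (hp : 0 < p) (N : ℕ) (f : ℕ → ℝ) :
    ∑ n ∈ range (p * N), f n = ∑ q ∈ range N, ∑ d ∈ range p, f (d + p * q) := by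
  rw [← Finset.sum_product']
  apply Finset.sum_nbij' (fun n => (n / p, n % p)) (fun x => x.2 + p * x.1)
  · intro n hn
    simp only [mem_range, mem_product] at *
    exact ⟨Nat.div_lt_of_lt_mul (by omega), Nat.mod_lt _ hp⟩
  · intro x hx
    simp only [mem_range, mem_product] at *
    have h1 : x.2 + p * x.1 < p * (x.1 + 1) := by
      have := hx.2; nlinarith [hx.1, hx.2]
    calc x.2 + p * x.1 < p * (x.1 + 1) := h1
      _ ≤ p * N := Nat.mul_le_mul_left p (by omega)
  · intro n _
    exact Nat.mod_add_div n p
  · rintro ⟨q, d⟩ hx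
    simp only [mem_range, mem_product] at hx
    have h1 : (d + p * q) / p = q := by
      rw [Nat.add_mul_div_left _ _ hp, Nat.div_eq_of_lt hx.2]
      omega
    have h2 : (d + p * q) % p = d := by
      rw [Nat.add_mul_mod_self_left, Nat.mod_eq_of_lt hx.2]
    simp [h1, h2]
  · intro n _
    conv_lhs => rw [← Nat.mod_add_div n p]

lemma T_inner {p : ℕ} (hp : 2 ≤ p) (M m : ℕ) (j : ZMod p) (d : ℕ) (hd : d < p) :
    ∑ q ∈ range (p ^ (M + 1)),
        (if (((Nat.digits p (d + p * q)).sum : ZMod p) = j)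
          then ((d + p * q : ℕ) : ℝ) ^ m else 0)
      = ∑ k ∈ range (m + 1),
          (p : ℝ) ^ k * (d : ℝ) ^ (m - k) * (m.choose k) * T p M k (j - (d : ZMod p)) := by
  haveI : NeZero p := ⟨by omega⟩
  have step1 : ∀ q ∈ range (p ^ (M + 1)),
      (if (((Nat.digits p (d + p * q)).sum : ZMod p) = j)
        then ((d + p * q : ℕ) : ℝ) ^ m else 0)
      = ∑ k ∈ range (m + 1),
          (if (((Nat.digits p q).sum : ZMod p) = j - (d : ZMod p))
            then (p : ℝ) ^ k * (q : ℝ) ^ k * (d : ℝ) ^ (m - k) * (m.choose k) else 0) := by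
    intro q _
    have hcond : ((((Nat.digits p (d + p * q)).sum : ℕ) : ZMod p) = j)
        ↔ (((Nat.digits p q).sum : ZMod p) = j - (d : ZMod p)) := by
      rw [digitsum_add_mul hp d q hd]
      push_cast
      rw [eq_sub_iff_add_eq, add_comm]
    have hval : ((d + p * q : ℕ) : ℝ) ^ m
        = ∑ k ∈ range (m + 1), (p : ℝ) ^ k * (q : ℝ) ^ k * (d : ℝ) ^ (m - k) * (m.choose k) := by
      push_cast
      rw [add_comm (d : ℝ), add_pow]
      apply Finset.sum_congr rfl
      intro k _
      ring
    rw [if_congr hcond hval rfl]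
    split_ifs with h
    · rfl
    · simp
  rw [Finset.sum_congr rfl step1, Finset.sum_comm]
  apply Finset.sum_congr rfl
  intro k _
  unfold T
  rw [Finset.mul_sum]
  apply Finset.sum_congr rfl
  intro q _
  split_ifs with h
  · ring
  · ring

lemma T_indep {p : ℕ} (hp : 2 ≤ p) :
    ∀ M m, m ≤ M → ∀ j j' : ZMod p, T p M m j = T p M m j' := by
  haveI : NeZero p := ⟨by omega⟩
  intro M
  induction M with
  | zero =>
    intro m hm j j'
    have hm0 : m = 0 := Nat.le_zero.mp hm
    subst hm0
    suffices h : ∀ j : ZMod p, T p 0 0 j = 1 by rw [h, h]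
    intro j
    unfold T
    have h1 : ∀ n ∈ range (p ^ (0 + 1)),
        (if (((Nat.digits p n).sum : ZMod p) = j) then (n : ℝ) ^ 0 else 0)
        = if ((n : ZMod p) = j) then 1 else 0 := by
      intro n hn
      simp only [mem_range, zero_add, pow_one] at hn
      rw [digitsum_lt hp hn, pow_zero]
    rw [Finset.sum_congr rfl h1]
    have h2 : p ^ (0 + 1) = p := by ring
    rw [h2, sum_range_zmod (fun c => if c = j then (1 : ℝ) else 0)]
    simp
  | succ M ih =>
    intro m hm j j'
    suffices H : ∀ j : ZMod p, T p (M + 1) m j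
        = (∑ d ∈ range p, ∑ k ∈ range m,
            (p : ℝ) ^ k * (d : ℝ) ^ (m - k) * (m.choose k) * T p M k 0)
          + (p : ℝ) ^ m * ∑ c : ZMod p, T p M m c by
      rw [H j, H j']
    intro j
    unfold T
    have hsplit : p ^ (M + 1 + 1) = p * p ^ (M + 1) := by ring
    rw [hsplit, reindex (by omega : 0 < p), Finset.sum_comm]
    have h1 : ∀ d ∈ range p,
        ∑ q ∈ range (p ^ (M + 1)),
          (if (((Nat.digits p (d + p * q)).sum : ZMod p) = j)
            then ((d + p * q : ℕ) : ℝ) ^ m else 0)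
        = (∑ k ∈ range m,
            (p : ℝ) ^ k * (d : ℝ) ^ (m - k) * (m.choose k) * T p M k 0)
          + (p : ℝ) ^ m * T p M m (j - (d : ZMod p)) := by
      intro d hd
      rw [T_inner hp M m j d (mem_range.mp hd), Finset.sum_range_succ]
      congr 1
      · apply Finset.sum_congr rfl
        intro k hk
        have hk' := mem_range.mp hk
        rw [ih k (by omega : k ≤ M) (j - (d : ZMod p)) 0]
      · rw [Nat.sub_self, pow_zero, Nat.choose_self]
        push_cast
        ring
    have hcast : ∀ n : ℕ, ((n : ℕ) : ℝ) ^ m = (n : ℝ) ^ m := fun n => rfl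
    calc ∑ d ∈ range p, ∑ q ∈ range (p ^ (M + 1)),
          (if (((Nat.digits p (d + p * q)).sum : ZMod p) = j)
            then ((d + p * q : ℕ) : ℝ) ^ m else 0)
        = ∑ d ∈ range p,
            ((∑ k ∈ range m,
              (p : ℝ) ^ k * (d : ℝ) ^ (m - k) * (m.choose k) * T p M k 0)
            + (p : ℝ) ^ m * T p M m (j - (d : ZMod p))) := Finset.sum_congr rfl h1
      _ = (∑ d ∈ range p, ∑ k ∈ range m,
            (p : ℝ) ^ k * (d : ℝ) ^ (m - k) * (m.choose k) * T p M k 0)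
          + (p : ℝ) ^ m * ∑ d ∈ range p, T p M m (j - (d : ZMod p)) := by
          rw [Finset.sum_add_distrib, Finset.mul_sum]
      _ = (∑ d ∈ range p, ∑ k ∈ range m,
            (p : ℝ) ^ k * (d : ℝ) ^ (m - k) * (m.choose k) * T p M k 0)
          + (p : ℝ) ^ m * ∑ c : ZMod p, T p M m c := by
          congr 1
          rw [sum_range_zmod (fun c => T p M m (j - c))]
          congr 1
          exact Fintype.sum_equiv (Equiv.subLeft j) _ _ (fun c => rfl)

/-- Sidelobe theorem: with S_p(n) = Σ_{i=1}^{2^{p-1}-1} w_i(n) B_i,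
Σ_{n<L} n^m S_p(n) = N_m(L) B_0 where N_m(L) = 2^{p-1} P_m - Σ_{n<L} n^m. -/
theorem sum_pow_mul_sidelobe (p M : ℕ) (hp : 2 ≤ p) (L : ℕ) (hL : L = p ^ (M + 1))
    (a : ℕ → ℝ) (ha : ∀ n, a n = a (vp p n))
    (B : ℕ → ℝ) (hB : ∀ i, B i = ∑ n ∈ Finset.range p, w p i n * a n)
    (S : ℕ → ℝ) (hS : ∀ n, S n = ∑ i ∈ Finset.Ico 1 (2 ^ (p - 1)), w p i n * B i)
    (m : ℕ) (hm1 : 1 ≤ m) (hm2 : m ≤ M) :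
    ∑ n ∈ Finset.range L, (n : ℝ) ^ m * S n
      = ((2 : ℝ) ^ (p - 1)
            * (∑ n ∈ (Finset.range L).filter (fun n => vp p n = 0), (n : ℝ) ^ m)
          - ∑ n ∈ Finset.range L, (n : ℝ) ^ m) * B 0 := by
  haveI : NeZero p := ⟨by omega⟩
  have hwz : ∀ n, w p 0 n = 1 := by
    intro n; unfold w; simp
  have hB0 : B 0 = ∑ r ∈ Finset.range p, a r := by
    rw [hB 0]
    apply Finset.sum_congr rfl
    intro r _
    rw [hwz r, one_mul]
  have hSn : ∀ n, S n = (2 : ℝ) ^ (p - 1) * a n - B 0 := by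
    intro n
    have expand : ∑ i ∈ Finset.range (2 ^ (p - 1)), w p i n * B i
        = (2 : ℝ) ^ (p - 1) * a n := by
      calc ∑ i ∈ Finset.range (2 ^ (p - 1)), w p i n * B i
          = ∑ i ∈ Finset.range (2 ^ (p - 1)), ∑ r ∈ Finset.range p,
              w p i n * w p i r * a r := by
            apply Finset.sum_congr rfl
            intro i _
            rw [hB i, Finset.mul_sum]
            apply Finset.sum_congr rfl
            intro r _
            ring
        _ = ∑ r ∈ Finset.range p,
              (∑ i ∈ Finset.range (2 ^ (p - 1)), w p i n * w p i r) * a r := by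
            rw [Finset.sum_comm]
            apply Finset.sum_congr rfl
            intro r _
            rw [Finset.sum_mul]
        _ = ∑ r ∈ Finset.range p,
              (if r = vp p n then (2 : ℝ) ^ (p - 1) * a r else 0) := by
            apply Finset.sum_congr rfl
            intro r hr
            rw [orth hp n r, vp_lt_self hp (Finset.mem_range.mp hr)]
            by_cases h : vp p n = r
            · rw [if_pos h, if_pos h.symm]
            · rw [if_neg h, if_neg (fun h' => h h'.symm), zero_mul]
        _ = (2 : ℝ) ^ (p - 1) * a n := by
            rw [Finset.sum_ite_eq' (Finset.range p) (vp p n)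
                (fun r => (2 : ℝ) ^ (p - 1) * a r),
              if_pos (Finset.mem_range.mpr (vp_lt hp n)), ← ha n]
    rw [hS n]
    have hsplit : ∑ i ∈ Finset.Ico 1 (2 ^ (p - 1)), w p i n * B i
        = (∑ i ∈ Finset.range (2 ^ (p - 1)), w p i n * B i) - w p 0 n * B 0 := by
      rw [Finset.range_eq_Ico,
        Finset.sum_eq_sum_Ico_succ_bot (by positivity : 0 < 2 ^ (p - 1))]
      ring
    rw [hsplit, expand, hwz, one_mul]
  have hfiber : ∀ j, j < p →
      ∑ n ∈ (Finset.range L).filter (fun n => vp p n = j), (n : ℝ) ^ m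
        = T p M m ((j : ℕ) : ZMod p) := by
    intro j hj
    unfold T
    rw [hL, Finset.sum_filter]
    apply Finset.sum_congr rfl
    intro n _
    have hiff : (vp p n = j)
        ↔ (((Nat.digits p n).sum : ZMod p) = ((j : ℕ) : ZMod p)) := by
      rw [ZMod.natCast_eq_natCast_iff]
      unfold Nat.ModEq vp
      rw [Nat.mod_eq_of_lt hj]
    exact if_congr hiff rfl rfl
  have key2 : ∑ n ∈ Finset.range L, (n : ℝ) ^ m * a n
      = (∑ n ∈ (Finset.range L).filter (fun n => vp p n = 0), (n : ℝ) ^ m) * B 0 := by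
    rw [← Finset.sum_fiberwise_of_maps_to
      (fun n _ => Finset.mem_range.mpr (vp_lt hp n)) (fun n => (n : ℝ) ^ m * a n)]
    have h1 : ∀ j ∈ Finset.range p,
        ∑ n ∈ (Finset.range L).filter (fun n => vp p n = j), (n : ℝ) ^ m * a n
        = (∑ n ∈ (Finset.range L).filter (fun n => vp p n = 0), (n : ℝ) ^ m) * a j := by
      intro j hj
      have hj' := Finset.mem_range.mp hj
      have ha' : ∀ n ∈ (Finset.range L).filter (fun n => vp p n = j),
          (n : ℝ) ^ m * a n = (n : ℝ) ^ m * a j := by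
        intro n hn
        rw [Finset.mem_filter] at hn
        rw [ha n, hn.2]
      rw [Finset.sum_congr rfl ha', ← Finset.sum_mul]
      congr 1
      rw [hfiber j hj', hfiber 0 (by omega)]
      exact T_indep hp M m hm2 _ _
    rw [Finset.sum_congr rfl h1, ← Finset.mul_sum, ← hB0]
  calc ∑ n ∈ Finset.range L, (n : ℝ) ^ m * S n
      = ∑ n ∈ Finset.range L,
          ((2 : ℝ) ^ (p - 1) * ((n : ℝ) ^ m * a n) - (n : ℝ) ^ m * B 0) := by
        apply Finset.sum_congr rfl
        intro n _
        rw [hSn n]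
        ring
    _ = (2 : ℝ) ^ (p - 1) * (∑ n ∈ Finset.range L, (n : ℝ) ^ m * a n)
        - (∑ n ∈ Finset.range L, (n : ℝ) ^ m) * B 0 := by
        rw [Finset.sum_sub_distrib, Finset.mul_sum, Finset.sum_mul]
    _ = ((2 : ℝ) ^ (p - 1)
            * (∑ n ∈ (Finset.range L).filter (fun n => vp p n = 0), (n : ℝ) ^ m)
          - ∑ n ∈ Finset.range L, (n : ℝ) ^ m) * B 0 := by
        rw [key2]
        ring
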